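/- Let (Ω, 𝓕, μ) be a standard Borel probability space, T : Ω → ℝ measurable, E a standard Borel space, X : Ω → E measurable, L > 0 fixed, and H : E → (ℝ → ℝ≥0) with (x,s) ↦ H(x)(s) jointly measurable. Assume that for (μ.map X)-almost every x, the regular conditional distribution of T given X = x is absolutely continuous with respect to Lebesgue measure with density t ↦ 1_{[0,∞)}(t) · H(x)(t) · exp(−∫₀ᵗ H(x)(s) ds). Define the propensity process Θ_L : Ω → (ℝ → ℝ≥0) by Θ_L(ω)(s) = H(X(ω))(s) for s ∈ [0, L) and Θ_L(ω)(s) = 0 for s ∉ [0, L). Then the restricted treatment time U = min(T, L) is conditionally independent of X given the σ-algebra generated by Θ_L. -/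

import Mathlib

open MeasureTheory ProbabilityTheory
open MeasureTheory ProbabilityTheory
open scoped ENNReal

lemma lintegral_condexpKernel_self
    {Ω : Type*} {m : MeasurableSpace Ω} [mΩ : MeasurableSpace Ω] [StandardBorelSpace Ω]
    [Nonempty Ω] (μ : Measure Ω) [IsFiniteMeasure μ] (hm : m ≤ mΩ)
    {f : Ω → ℝ≥0∞} (hf : Measurable[m] f) :
    ∀ᵐ ω ∂μ, ∫⁻ ω', f ω' ∂(condExpKernel μ m ω) = f ω := by
  refine @Measurable.ennreal_induction Ω m
    (fun f => ∀ᵐ ω ∂μ, ∫⁻ ω', f ω' ∂(condExpKernel μ m ω) = f ω) ?_ ?_ ?_ f hf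
  · intro c s hs
    have h1 := condExpKernel_ae_eq_condExp (μ := μ) hm (hm s hs)
    have h2 : μ⟦s|m⟧ = s.indicator fun _ => (1:ℝ) :=
      condExp_of_stronglyMeasurable hm
        ((@stronglyMeasurable_const Ω ℝ m _ _).indicator hs)
        ((integrable_const 1).indicator (hm s hs))
    rw [h2] at h1
    filter_upwards [h1] with ω hω
    rw [lintegral_indicator_const (hm s hs)]
    by_cases hωs : ω ∈ s
    · simp only [Set.indicator_of_mem hωs, measureReal_def] at hω ⊢
      rw [ENNReal.toReal_eq_one_iff] at hω
      rw [hω, mul_one]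
    · simp only [Set.indicator_of_notMem hωs, measureReal_def] at hω ⊢
      rw [ENNReal.toReal_eq_zero_iff] at hω
      rcases hω with hω | hω
      · rw [hω, mul_zero]
      · exact absurd hω (measure_ne_top _ _)
  · intro f g _ hfm _ hPf hPg
    filter_upwards [hPf, hPg] with ω h1 h2
    simp only [Pi.add_apply]
    rw [lintegral_add_left (hfm.mono hm le_rfl), h1, h2]
  · intro f hfm hmono hPf
    rw [← ae_all_iff] at hPf
    filter_upwards [hPf] with ω hω
    rw [lintegral_iSup (fun n => (hfm n).mono hm le_rfl) hmono]
    exact iSup_congr hω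

lemma condIndepFun_of_measurable_condexp
    {Ω E : Type*} {m : MeasurableSpace Ω} [mΩ : MeasurableSpace Ω] [StandardBorelSpace Ω]
    [Nonempty Ω] [mE : MeasurableSpace E] (μ : Measure Ω) [IsProbabilityMeasure μ]
    (hm : m ≤ mΩ) {U : Ω → ℝ} {X : Ω → E} (hU : Measurable U) (hX : Measurable X)
    (hmX : m ≤ MeasurableSpace.comap X mE)
    (h : ∀ s : Set ℝ, MeasurableSet s → ∃ φ : Ω → ℝ, Measurable[m] φ ∧
      μ⟦U ⁻¹' s | MeasurableSpace.comap X mE⟧ =ᵐ[μ] φ) :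
    CondIndepFun m hm U X μ := by
  rw [condIndepFun_iff_condExp_inter_preimage_eq_mul hU hX]
  intro s t hs ht
  obtain ⟨φ, hφm, hφ⟩ := h s hs
  have hXc : MeasurableSpace.comap X mE ≤ mΩ := hX.comap_le
  haveI : IsFiniteMeasure (μ.trim hm) := isFiniteMeasure_trim hm
  haveI : IsFiniteMeasure (μ.trim hXc) := isFiniteMeasure_trim hXc
  set A := U ⁻¹' s with hA_def
  set B := X ⁻¹' t with hB_def
  have hA : MeasurableSet A := hU hs
  have hB : MeasurableSet B := hX ht
  have hBc : MeasurableSet[MeasurableSpace.comap X mE] B := ⟨t, ht, rfl⟩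
  have hφm' : StronglyMeasurable[m] φ := hφm.stronglyMeasurable
  have hφint : Integrable φ μ := (integrable_condExp).congr hφ
  have hiA : Integrable (A.indicator fun _ => (1:ℝ)) μ := (integrable_const 1).indicator hA
  have hiB : Integrable (B.indicator fun _ => (1:ℝ)) μ := (integrable_const 1).indicator hB
  -- (A ∩ B).indicator 1 = B.indicator 1 * A.indicator 1
  have hind : (A ∩ B).indicator (fun _ => (1:ℝ)) =
      (B.indicator fun _ => (1:ℝ)) * (A.indicator fun _ => (1:ℝ)) := by
    funext ω
    by_cases h1 : ω ∈ A <;> by_cases h2 : ω ∈ B <;>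
      simp [Set.indicator_of_mem, Set.indicator_of_notMem, Set.mem_inter_iff, h1, h2]
  have hiBA : Integrable ((B.indicator fun _ => (1:ℝ)) * (A.indicator fun _ => (1:ℝ))) μ := by
    rw [← hind]; exact (integrable_const 1).indicator (hA.inter hB)
  -- step 2 : pull out the B indicator at level mX
  have step2 : μ⟦A ∩ B | MeasurableSpace.comap X mE⟧
      =ᵐ[μ] (B.indicator fun _ => (1:ℝ)) * φ := by
    have h1 : μ⟦A ∩ B | MeasurableSpace.comap X mE⟧
        =ᵐ[μ] (B.indicator fun _ => (1:ℝ)) * μ⟦A | MeasurableSpace.comap X mE⟧ := by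
      rw [hind]
      exact condExp_mul_of_stronglyMeasurable_left
        ((@stronglyMeasurable_const Ω ℝ (MeasurableSpace.comap X mE) _ _).indicator hBc)
        hiBA hiA
    exact h1.trans (Filter.EventuallyEq.mul Filter.EventuallyEq.rfl hφ)
  have hφB_int : Integrable (φ * (B.indicator fun _ => (1:ℝ))) μ := by
    have h1 : Integrable ((B.indicator fun _ => (1:ℝ)) * μ⟦A | MeasurableSpace.comap X mE⟧) μ :=
      integrable_condExp.bdd_mul (aestronglyMeasurable_const.indicator hB)
        (c := 1) (Filter.Eventually.of_forall fun ω => by by_cases hω : ω ∈ B <;>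
          simp [Set.indicator_of_mem, Set.indicator_of_notMem, hω])
    refine h1.congr ?_
    filter_upwards [hφ] with ω hω
    simp only [Pi.mul_apply]
    rw [mul_comm, hω]
  -- step 4 : pull out φ at level m
  have step4 : μ[(B.indicator fun _ => (1:ℝ)) * φ | m] =ᵐ[μ] φ * μ⟦B | m⟧ := by
    have : (B.indicator fun _ => (1:ℝ)) * φ = φ * (B.indicator fun _ => (1:ℝ)) := by
      rw [mul_comm]
    rw [this]
    exact condExp_mul_of_stronglyMeasurable_left hφm' hφB_int hiB
  -- step 5 : μ⟦A | m⟧ =ᵐ φ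
  have step5 : μ⟦A | m⟧ =ᵐ[μ] φ := by
    have h1 : μ⟦A | m⟧ =ᵐ[μ] μ[μ⟦A | MeasurableSpace.comap X mE⟧ | m] :=
      (condExp_condExp_of_le hmX hXc).symm
    have h2 : μ[μ⟦A | MeasurableSpace.comap X mE⟧ | m] =ᵐ[μ] μ[φ | m] := condExp_congr_ae hφ
    have h3 : μ[φ | m] = φ := condExp_of_stronglyMeasurable hm hφm' hφint
    exact (h1.trans h2).trans (by rw [h3])
  -- combine
  have main : μ⟦A ∩ B | m⟧ =ᵐ[μ] φ * μ⟦B | m⟧ := by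
    have h1 : μ⟦A ∩ B | m⟧ =ᵐ[μ] μ[μ⟦A ∩ B | MeasurableSpace.comap X mE⟧ | m] :=
      (condExp_condExp_of_le hmX hXc).symm
    have h2 : μ[μ⟦A ∩ B | MeasurableSpace.comap X mE⟧ | m]
        =ᵐ[μ] μ[(B.indicator fun _ => (1:ℝ)) * φ | m] := condExp_congr_ae step2
    exact (h1.trans h2).trans step4
  filter_upwards [main, step5] with ω h1 h2
  rw [h1, Pi.mul_apply, h2]

section
variable {Ω : Type*} {m : MeasurableSpace Ω} [mΩ : MeasurableSpace Ω]

lemma measurable_lintegral_kernel_param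
    (κ : @Kernel Ω Ω m mΩ) [IsSFiniteKernel κ]
    {F : Ω × ℝ → ℝ≥0∞} (hF : Measurable F) :
    Measurable[m.prod Real.measurableSpace]
      fun p : Ω × ℝ => ∫⁻ ω', F (ω', p.2) ∂(κ p.1) := by
  have h : @Measurable ((Ω × ℝ) × Ω) (ℝ≥0∞)
      (@Prod.instMeasurableSpace _ _ (m.prod Real.measurableSpace) mΩ) _
      (fun q : (Ω × ℝ) × Ω => F (q.2, q.1.2)) := by
    refine hF.comp (Measurable.prodMk measurable_snd ?_)
    exact (@measurable_snd _ _ m Real.measurableSpace).comp measurable_fst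
  exact Measurable.lintegral_kernel_prod_right' (κ := Kernel.prodMkRight ℝ κ) h
end

section helpers
variable {Ω : Type*}

/-- `Λ(ω, t) = ∫⁻ u in (0, t], G (ω, u)`. -/
noncomputable def LamOf (G : Ω × ℝ → ℝ≥0∞) : Ω × ℝ → ℝ≥0∞ :=
  fun p => ∫⁻ u, (Set.Ioc (0:ℝ) p.2).indicator (fun v => G (p.1, v)) u

/-- `V(ω, t) = G(ω,t) * exp (- Λ(ω,t))`, computed through the reals. -/
noncomputable def VOf (G : Ω × ℝ → ℝ≥0∞) : Ω × ℝ → ℝ≥0∞ :=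
  fun p => ENNReal.ofReal ((G p).toReal * Real.exp (-(LamOf G p).toReal))

variable {m : MeasurableSpace Ω}

lemma measurable_LamOf {G : Ω × ℝ → ℝ≥0∞}
    (hG : Measurable[m.prod Real.measurableSpace] G) :
    Measurable[m.prod Real.measurableSpace] (LamOf G) := by
  unfold LamOf
  simp_rw [Set.indicator_apply]
  refine Measurable.lintegral_prod_right'
    (f := fun q : (Ω × ℝ) × ℝ => if q.2 ∈ Set.Ioc (0:ℝ) q.1.2 then G (q.1.1, q.2) else 0) ?_
  refine Measurable.ite ?_ (hG.comp ((measurable_fst.comp measurable_fst).prodMk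
    measurable_snd)) measurable_const
  exact (measurableSet_lt measurable_const measurable_snd).inter
    (measurableSet_le measurable_snd (measurable_snd.comp measurable_fst))

lemma measurable_VOf {G : Ω × ℝ → ℝ≥0∞}
    (hG : Measurable[m.prod Real.measurableSpace] G) :
    Measurable[m.prod Real.measurableSpace] (VOf G) :=
  (hG.ennreal_toReal.mul ((measurable_LamOf hG).ennreal_toReal.neg.exp)).ennreal_ofReal

open Classical in
lemma measurable_phiOf {G : Ω × ℝ → ℝ≥0∞}
    (hG : Measurable[m.prod Real.measurableSpace] G) {A B : Set ℝ}
    (hA : MeasurableSet A) (hB : MeasurableSet B) (c : ℝ≥0∞) :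
    Measurable[m] fun ω => (∫⁻ t, A.indicator (fun t => VOf G (ω, t)) t)
      + c * (1 - ∫⁻ t, B.indicator (fun t => VOf G (ω, t)) t) := by
  have hV := measurable_VOf hG
  have h1 : ∀ (S : Set ℝ), MeasurableSet S →
      Measurable[m] fun ω => ∫⁻ t, S.indicator (fun t => VOf G (ω, t)) t := by
    intro S hS
    have hf : Measurable[m.prod Real.measurableSpace]
        fun p : Ω × ℝ => S.indicator (fun t => VOf G (p.1, t)) p.2 := by
      rw [show (fun p : Ω × ℝ => S.indicator (fun t => VOf G (p.1, t)) p.2)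
          = fun p : Ω × ℝ => if p.2 ∈ S then VOf G p else 0 from
        funext fun p => by by_cases h : p.2 ∈ S <;> simp [Set.indicator_apply, h]]
      exact Measurable.ite (measurable_snd hS) hV measurable_const
    exact Measurable.lintegral_prod_right' hf
  exact (h1 A hA).add (((h1 B hB).const_sub 1).const_mul c)

end helpers

/-- Proposition 1: if the regular conditional distribution of the treatment time `T` given the
covariate history `X` has hazard function `H (X ω)` (i.e. conditional density
`u ↦ 1_{[0,∞)}(u) · H x u · exp (-∫₀ᵘ H x s ds)` w.r.t. Lebesgue measure), then the restricted
treatment time `U = min (T, L)` is conditionally independent of `X` given the σ-algebra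
generated by the propensity process `Θ_L ω = (s ↦ H (X ω) s` for `s ∈ [0, L)`, `0` otherwise`)`. -/
theorem condIndepFun_min_given_propensityProcess
    {Ω E : Type*}
    [MeasurableSpace Ω] [StandardBorelSpace Ω] [Nonempty Ω]
    [MeasurableSpace E] [StandardBorelSpace E]
    (μ : Measure Ω) [IsProbabilityMeasure μ]
    (T : Ω → ℝ) (X : Ω → E) (hT : Measurable T) (hX : Measurable X)
    (L : ℝ) (hL : 0 < L)
    (H : E → ℝ → NNReal) (hH : Measurable fun p : E × ℝ => H p.1 p.2)
    (hdens : ∀ᵐ x ∂(μ.map X), condDistrib T X μ x =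
      volume.withDensity fun t : ℝ =>
        Set.indicator (Set.Ici (0 : ℝ))
          (fun u => ENNReal.ofReal
            ((H x u : ℝ) * Real.exp (-∫ s in (0 : ℝ)..u, (H x s : ℝ)))) t) :
    CondIndepFun
      (MeasurableSpace.comap
        (fun ω => fun s : ℝ => if s ∈ Set.Ico (0 : ℝ) L then H (X ω) s else 0) inferInstance)
      (Measurable.comap_le (measurable_pi_lambda _ (fun s => by
        by_cases hs : s ∈ Set.Ico (0 : ℝ) L
        · simp only [if_pos hs]
          exact hH.comp (hX.prodMk measurable_const)
        · simp only [if_neg hs]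
          exact measurable_const)))
      (fun ω => min (T ω) L) X μ := by
  classical
  set Θ : Ω → ℝ → NNReal :=
    fun ω => fun s : ℝ => if s ∈ Set.Ico (0 : ℝ) L then H (X ω) s else 0 with hΘdef
  have hU : Measurable fun ω => min (T ω) L := hT.min measurable_const
  have hg'm : Measurable (fun x : E => fun s : ℝ =>
      if s ∈ Set.Ico (0:ℝ) L then H x s else 0) := by
    refine measurable_pi_lambda _ (fun s => ?_)
    by_cases hs : s ∈ Set.Ico (0:ℝ) L
    · simp only [if_pos hs]; exact hH.comp (measurable_id.prodMk measurable_const)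
    · simp only [if_neg hs]; exact measurable_const
  have hmX : MeasurableSpace.comap Θ MeasurableSpace.pi
      ≤ MeasurableSpace.comap X inferInstance := by
    rw [show Θ = (fun x : E => fun s : ℝ =>
      if s ∈ Set.Ico (0:ℝ) L then H x s else 0) ∘ X from rfl]
    rw [← MeasurableSpace.comap_comp]
    exact MeasurableSpace.comap_mono hg'm.comap_le
  have hmΩ : MeasurableSpace.comap Θ MeasurableSpace.pi ≤ ‹MeasurableSpace Ω› :=
    hmX.trans hX.comap_le
  refine condIndepFun_of_measurable_condexp μ _ hU hX hmX ?_
  intro s hs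
  set s' : Set ℝ := (fun u : ℝ => min u L) ⁻¹' s with hs'def
  have hs' : MeasurableSet s' := (measurable_id.min measurable_const) hs
  set F : Ω × ℝ → ℝ≥0∞ := fun p => ((Θ p.1 p.2 : NNReal) : ℝ≥0∞) with hFdef
  have hFm : Measurable F := by
    simp only [hFdef, hΘdef]
    exact (Measurable.ite (measurable_snd measurableSet_Ico)
      (hH.comp ((hX.comp measurable_fst).prodMk measurable_snd))
      measurable_const).coe_nnreal_ennreal
  set G : Ω × ℝ → ℝ≥0∞ := fun p =>
    ∫⁻ ω', F (ω', p.2)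
      ∂(condExpKernel μ (MeasurableSpace.comap Θ MeasurableSpace.pi) p.1) with hGdef
  have hGm : Measurable[(MeasurableSpace.comap Θ MeasurableSpace.pi).prod
      Real.measurableSpace] G := by
    rw [hGdef]
    exact measurable_lintegral_kernel_param _ hFm
  have prodle : (MeasurableSpace.comap Θ MeasurableSpace.pi).prod Real.measurableSpace
      ≤ (Prod.instMeasurableSpace : MeasurableSpace (Ω × ℝ)) :=
    sup_le_sup (MeasurableSpace.comap_mono hmΩ) le_rfl
  have hGamb : Measurable G := hGm.mono prodle le_rfl
  have hVamb : Measurable (VOf G) := (measurable_VOf hGm).mono prodle le_rfl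
  have hΘmble : Measurable[MeasurableSpace.comap Θ MeasurableSpace.pi] Θ :=
    measurable_iff_comap_le.mpr le_rfl
  have hZae : ∀ t : ℝ, ∀ᵐ ω ∂μ, G (ω, t) = F (ω, t) := by
    intro t
    have hfm : Measurable[MeasurableSpace.comap Θ MeasurableSpace.pi]
        fun ω => F (ω, t) := by
      simp only [hFdef]
      exact ((measurable_pi_apply t).comp hΘmble).coe_nnreal_ennreal
    filter_upwards [lintegral_condexpKernel_self μ hmΩ hfm] with ω hω
    rw [hGdef]
    exact hω
  have hmeasEq : MeasurableSet {p : Ω × ℝ | G p = F p} :=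
    MeasureTheory.StronglyMeasurable.measurableSet_eq_fun hGamb.stronglyMeasurable hFm.stronglyMeasurable
  have hbad : (μ.prod (volume : Measure ℝ)) {p : Ω × ℝ | G p = F p}ᶜ = 0 := by
    rw [show (μ.prod (volume : Measure ℝ))
        = Measure.map Prod.swap ((volume : Measure ℝ).prod μ) from (Measure.prod_swap).symm]
    rw [Measure.map_apply measurable_swap hmeasEq.compl]
    rw [Measure.measure_prod_null (hmeasEq.compl.preimage measurable_swap)]
    refine Filter.Eventually.of_forall fun t => ?_
    exact ae_iff.mp (hZae t)
  have hfub : ∀ᵐ ω ∂μ, ∀ᵐ t ∂(volume : Measure ℝ), G (ω, t) = F (ω, t) := by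
    have h2 : ∀ᵐ p ∂(μ.prod (volume : Measure ℝ)), G p = F p := by
      rw [ae_iff]
      exact hbad
    exact Measure.ae_ae_of_ae_prod h2
  have hLamae : ∀ᵐ ω ∂μ, ∀ t : ℝ, LamOf G (ω, t)
      = ∫⁻ u, (Set.Ioc (0:ℝ) t).indicator (fun u => F (ω, u)) u := by
    filter_upwards [hfub] with ω hω
    intro t
    refine lintegral_congr_ae ?_
    filter_upwards [hω] with u hu
    by_cases h : u ∈ Set.Ioc (0:ℝ) t <;>
      simp [Set.indicator_apply, h, hu]
  have hdens' : ∀ᵐ ω ∂μ, condDistrib T X μ (X ω) =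
      volume.withDensity fun t : ℝ =>
        Set.indicator (Set.Ici (0 : ℝ))
          (fun u => ENNReal.ofReal
            ((H (X ω) u : ℝ) * Real.exp (-∫ s in (0 : ℝ)..u, (H (X ω) s : ℝ)))) t :=
    ae_of_ae_map hX.aemeasurable hdens
  have hVae : ∀ᵐ ω ∂μ, ∀ᵐ t ∂(volume : Measure ℝ), t ∈ Set.Ico (0:ℝ) L →
      VOf G (ω, t) = Set.indicator (Set.Ici (0 : ℝ))
          (fun u => ENNReal.ofReal
            ((H (X ω) u : ℝ) * Real.exp (-∫ s in (0 : ℝ)..u, (H (X ω) s : ℝ)))) t := by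
    filter_upwards [hfub, hLamae] with ω hωG hωLam
    filter_upwards [hωG] with t hGt
    intro htIco
    have hΘt : Θ ω t = H (X ω) t := by simp only [hΘdef]; rw [if_pos htIco]
    have hLam2 : LamOf G (ω, t) = ∫⁻ u in Set.Ioc (0:ℝ) t,
        ((H (X ω) u : NNReal) : ℝ≥0∞) ∂volume := by
      rw [hωLam t, lintegral_indicator measurableSet_Ioc]
      refine setLIntegral_congr_fun measurableSet_Ioc
        (fun u hu => ?_)
      have h1 : Θ ω u = H (X ω) u := by
        simp only [hΘdef]
        rw [if_pos ⟨le_of_lt hu.1, lt_of_le_of_lt hu.2 htIco.2⟩]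
      simp only [hFdef, h1]
    have hint : ∫ u in (0:ℝ)..t, (H (X ω) u : ℝ) = (LamOf G (ω, t)).toReal := by
      rw [hLam2, intervalIntegral.integral_of_le htIco.1]
      rw [integral_eq_lintegral_of_nonneg_ae
        (Filter.Eventually.of_forall fun u => (H (X ω) u).coe_nonneg)
        ((measurable_coe_nnreal_real.comp
          (hH.comp (measurable_const.prodMk measurable_id))).aestronglyMeasurable)]
      congr 1
      refine lintegral_congr fun u => ?_
      rw [ENNReal.ofReal_coe_nnreal]
    rw [Set.indicator_of_mem (Set.mem_Ici.mpr htIco.1)]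
    show ENNReal.ofReal ((G (ω, t)).toReal * Real.exp (-(LamOf G (ω, t)).toReal)) = _
    rw [hGt, ← hint]
    congr 2
    simp only [hFdef, hΘt, ENNReal.coe_toReal]
  have hKey : ∀ᵐ ω ∂μ, (condDistrib T X μ (X ω)) s' =
      (∫⁻ t, (s' ∩ Set.Ico 0 L).indicator (fun t => VOf G (ω, t)) t)
      + (s'.indicator (fun _ => (1:ℝ≥0∞)) L)
        * (1 - ∫⁻ t, (Set.Ico (0:ℝ) L).indicator (fun t => VOf G (ω, t)) t) := by
    filter_upwards [hdens', hVae] with ω hν hV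
    have hlin : ∀ A : Set ℝ, MeasurableSet A → condDistrib T X μ (X ω) A
        = ∫⁻ t, A.indicator (fun u => Set.indicator (Set.Ici (0 : ℝ))
          (fun u => ENNReal.ofReal
            ((H (X ω) u : ℝ) * Real.exp (-∫ s in (0 : ℝ)..u, (H (X ω) s : ℝ)))) u) t := by
      intro A hA
      rw [hν, withDensity_apply _ hA, ← lintegral_indicator hA]
    have hd0 : ∀ u : ℝ, u < 0 → Set.indicator (Set.Ici (0 : ℝ))
          (fun u => ENNReal.ofReal
            ((H (X ω) u : ℝ) * Real.exp (-∫ s in (0 : ℝ)..u, (H (X ω) s : ℝ)))) u = 0 :=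
      fun u hu => Set.indicator_of_notMem (by simpa using not_le.mpr hu) _
    have h1 : condDistrib T X μ (X ω) s' = condDistrib T X μ (X ω) (s' ∩ Set.Iio L)
        + condDistrib T X μ (X ω) (s' ∩ Set.Ici L) := by
      rw [← measure_inter_add_diff s' measurableSet_Iio]
      congr 1
      rw [Set.diff_eq, Set.compl_Iio]
    have h2 : condDistrib T X μ (X ω) (s' ∩ Set.Iio L)
        = condDistrib T X μ (X ω) (s' ∩ Set.Ico 0 L) := by
      rw [hlin _ (hs'.inter measurableSet_Iio), hlin _ (hs'.inter measurableSet_Ico)]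
      refine lintegral_congr fun t => ?_
      rcases lt_or_ge t 0 with h0 | h0
      · by_cases h1t : t ∈ s' ∩ Set.Iio L
        · rw [Set.indicator_of_mem h1t, hd0 t h0, Set.indicator_of_notMem
            (fun hmem => absurd hmem.2.1 (not_le.mpr h0))]
        · rw [Set.indicator_of_notMem h1t, Set.indicator_of_notMem
            (fun hmem => absurd hmem.2.1 (not_le.mpr h0))]
      · have hiff : t ∈ s' ∩ Set.Iio L ↔ t ∈ s' ∩ Set.Ico 0 L := by
          simp only [Set.mem_inter_iff, Set.mem_Iio, Set.mem_Ico]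
          exact ⟨fun h => ⟨h.1, h0, h.2⟩, fun h => ⟨h.1, h.2.2⟩⟩
        by_cases h1t : t ∈ s' ∩ Set.Iio L
        · rw [Set.indicator_of_mem h1t, Set.indicator_of_mem (hiff.mp h1t)]
        · rw [Set.indicator_of_notMem h1t,
            Set.indicator_of_notMem (fun c => h1t (hiff.mpr c))]
    have hmin : ∀ u : ℝ, L ≤ u → (u ∈ s' ↔ L ∈ s') := by
      intro u hu
      rw [hs'def]
      simp only [Set.mem_preimage]
      rw [min_eq_right hu, min_self]
    have h3 : condDistrib T X μ (X ω) (s' ∩ Set.Ici L)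
        = (s'.indicator (fun _ => (1:ℝ≥0∞)) L) * condDistrib T X μ (X ω) (Set.Ici L) := by
      by_cases hLs : L ∈ s'
      · rw [Set.indicator_of_mem hLs, one_mul]
        congr 1
        exact Set.inter_eq_right.mpr fun u hu => (hmin u hu).mpr hLs
      · have hempty : s' ∩ Set.Ici L = ∅ :=
          Set.eq_empty_iff_forall_notMem.mpr fun u hu => hLs ((hmin u hu.2).mp hu.1)
        rw [Set.indicator_of_notMem hLs, zero_mul, hempty, measure_empty]
    have h4 : condDistrib T X μ (X ω) (Set.Ici L)
        = 1 - condDistrib T X μ (X ω) (Set.Iio L) := by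
      rw [← Set.compl_Iio, measure_compl measurableSet_Iio (measure_ne_top _ _), measure_univ]
    have h5 : condDistrib T X μ (X ω) (Set.Iio L)
        = condDistrib T X μ (X ω) (Set.Ico 0 L) := by
      rw [hlin _ measurableSet_Iio, hlin _ measurableSet_Ico]
      refine lintegral_congr fun t => ?_
      rcases lt_or_ge t 0 with h0 | h0
      · by_cases h1t : t ∈ Set.Iio L
        · rw [Set.indicator_of_mem h1t, hd0 t h0, Set.indicator_of_notMem
            (fun hmem => absurd hmem.1 (not_le.mpr h0))]
        · rw [Set.indicator_of_notMem h1t, Set.indicator_of_notMem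
            (fun hmem => absurd hmem.1 (not_le.mpr h0))]
      · have hiff : t ∈ Set.Iio L ↔ t ∈ Set.Ico 0 L := by
          simp only [Set.mem_Iio, Set.mem_Ico]
          exact ⟨fun h => ⟨h0, h⟩, fun h => h.2⟩
        by_cases h1t : t ∈ Set.Iio L
        · rw [Set.indicator_of_mem h1t, Set.indicator_of_mem (hiff.mp h1t)]
        · rw [Set.indicator_of_notMem h1t,
            Set.indicator_of_notMem (fun c => h1t (hiff.mpr c))]
    have hrepl : ∀ A : Set ℝ, A ⊆ Set.Ico 0 L →
        (∫⁻ t, A.indicator (fun u => Set.indicator (Set.Ici (0 : ℝ))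
          (fun u => ENNReal.ofReal
            ((H (X ω) u : ℝ) * Real.exp (-∫ s in (0 : ℝ)..u, (H (X ω) s : ℝ)))) u) t)
        = ∫⁻ t, A.indicator (fun t => VOf G (ω, t)) t := by
      intro A hA
      refine lintegral_congr_ae ?_
      filter_upwards [hV] with t htV
      by_cases h : t ∈ A
      · rw [Set.indicator_of_mem h, Set.indicator_of_mem h, htV (hA h)]
      · rw [Set.indicator_of_notMem h, Set.indicator_of_notMem h]
    rw [h1, h2, h3, h4, h5, hlin _ (hs'.inter measurableSet_Ico), hlin _ measurableSet_Ico,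
      hrepl _ Set.inter_subset_right, hrepl _ (subset_refl _)]
  refine ⟨fun ω => ((∫⁻ t, (s' ∩ Set.Ico 0 L).indicator (fun t => VOf G (ω, t)) t)
      + (s'.indicator (fun _ => (1:ℝ≥0∞)) L)
        * (1 - ∫⁻ t, (Set.Ico (0:ℝ) L).indicator (fun t => VOf G (ω, t)) t)).toReal, ?_, ?_⟩
  · exact (measurable_phiOf hGm (hs'.inter measurableSet_Ico) measurableSet_Ico _).ennreal_toReal
  · have hcd := condDistrib_ae_eq_condExp (μ := μ) hX hT hs'
    have hpre : (fun ω => min (T ω) L) ⁻¹' s = T ⁻¹' s' := rfl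
    rw [hpre]
    refine Filter.EventuallyEq.trans hcd.symm ?_
    filter_upwards [hKey] with ω hω
    rw [measureReal_def, hω]
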